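/- In a complete geodesic metric space X, if π_P : X → P satisfies (P1) (for each r ∈ P, z ∈ X: d(r,z) = d(r,π_P(z)) + d(π_P(z),z)) and (P2) (π_P is locally constant outside P), then π_P satisfies (P'2): for z₁,z₂ with π_P(z₁) ≠ π_P(z₂), d(z₁,z₂) = d(z₁,π_P(z₁)) + d(π_P(z₁),π_P(z₂)) + d(π_P(z₂),z₂). -/

import Mathlib

open Metric Set

/-- `γ` restricted to `[a,b]` is a geodesic (isometric embedding of the interval). -/
def IsGeodesicOn {X : Type*} [MetricSpace X] (γ : ℝ → X) (a b : ℝ) : Prop :=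
  ∀ s ∈ Set.Icc a b, ∀ t ∈ Set.Icc a b, dist (γ s) (γ t) = |s - t|

/-- A geodesic metric space: any two points are joined by a geodesic. -/
def GeodesicSpace (X : Type*) [MetricSpace X] : Prop :=
  ∀ x y : X, ∃ γ : ℝ → X, γ 0 = x ∧ γ (dist x y) = y ∧ IsGeodesicOn γ 0 (dist x y)

/-- A function on `[a,b]` that is locally constant (with a metric-style modulus)
is constant. -/
lemma eq_const_of_locally_const {Y : Type*} (f : ℝ → Y) (a b : ℝ) (hab : a ≤ b)
    (h : ∀ t ∈ Set.Icc a b, ∃ δ > 0, ∀ s ∈ Set.Icc a b, |s - t| < δ → f s = f t) :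
    f b = f a := by
  set S : Set ℝ := {u : ℝ | u ∈ Set.Icc a b ∧ f u = f a} with hSdef
  have haS : a ∈ S := ⟨⟨le_refl a, hab⟩, rfl⟩
  have hne : S.Nonempty := ⟨a, haS⟩
  have hbdd : BddAbove S := ⟨b, fun x hx => hx.1.2⟩
  set c := sSup S with hc
  have hac : a ≤ c := le_csSup hbdd haS
  have hcb : c ≤ b := csSup_le hne fun x hx => hx.1.2
  obtain ⟨δ, hδ, hδf⟩ := h c ⟨hac, hcb⟩
  have hcS : f c = f a := by
    obtain ⟨s, hsS, hs⟩ := exists_lt_of_lt_csSup hne (by linarith : c - δ < c)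
    have hsc : s ≤ c := le_csSup hbdd hsS
    have : f s = f c := hδf s hsS.1 (by rw [abs_sub_lt_iff]; constructor <;> linarith)
    rw [← this, hsS.2]
  rcases eq_or_lt_of_le hcb with h' | h'
  · rw [← h']; exact hcS
  · exfalso
    set u := min b (c + δ / 2) with hu
    have hcu : c < u := lt_min h' (by linarith)
    have hub : u ≤ b := min_le_left _ _
    have huc : u - c ≤ δ / 2 := by
      have : u ≤ c + δ / 2 := min_le_right _ _
      linarith
    have huS : u ∈ S := by
      refine ⟨⟨le_trans hac hcu.le, hub⟩, ?_⟩
      have : f u = f c := hδf u ⟨le_trans hac hcu.le, hub⟩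
        (by rw [abs_sub_lt_iff]; constructor <;> linarith)
      rw [this, hcS]
    exact absurd (le_csSup hbdd huS) (not_le.mpr hcu)

/-- If `γ` is a geodesic on `[a,b]` whose interior points `γ s`, `a ≤ s < b`, avoid `Pset`
and `γ b ∈ Pset`, then `π (γ a) = γ b`. -/
lemma firstHit {X : Type*} [MetricSpace X] (Pset : Set X) (π : X → X)
    (hP1 : ∀ r ∈ Pset, ∀ z : X, dist r z = dist r (π z) + dist (π z) z)
    (hP2 : ∀ z : X, z ∉ Pset → ∃ ε > 0, ∀ w ∈ Metric.ball z ε, π w = π z)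
    (γ : ℝ → X) (a b : ℝ) (hab : a ≤ b) (hgeo : IsGeodesicOn γ a b)
    (hb : γ b ∈ Pset) (hnot : ∀ s, a ≤ s → s < b → γ s ∉ Pset) :
    π (γ a) = γ b := by
  have πfix : ∀ p ∈ Pset, π p = p := by
    intro p hp
    have := hP1 p hp p
    simp only [dist_self] at this
    have h0 : dist p (π p) = 0 := by
      have := dist_comm (π p) p
      nlinarith [dist_nonneg (x := p) (y := π p), dist_comm (π p) p]
    exact (dist_eq_zero.mp (by rw [dist_comm]; exact h0))
  rcases eq_or_lt_of_le hab with heq | hlt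
  · rw [← heq]
    rw [πfix (γ a) (heq ▸ hb)]
  -- π is constant on [a, b)
  have hconst : ∀ t, a ≤ t → t < b → π (γ t) = π (γ a) := by
    intro t hat htb
    refine eq_const_of_locally_const (fun s => π (γ s)) a t hat ?_
    intro u hu
    have hub : u < b := lt_of_le_of_lt hu.2 htb
    have huI : u ∈ Set.Icc a b := ⟨hu.1, hub.le⟩
    obtain ⟨ε, hε, hεf⟩ := hP2 (γ u) (hnot u hu.1 hub)
    refine ⟨ε, hε, fun s hs hsu => ?_⟩
    have hsI : s ∈ Set.Icc a b := ⟨hs.1, le_trans hs.2 htb.le⟩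
    have : dist (γ s) (γ u) = |s - u| := hgeo s hsI u huI
    exact hεf (γ s) (by rw [Metric.mem_ball, this]; exact hsu)
  have key : ∀ t, a ≤ t → t < b → dist (γ b) (π (γ a)) ≤ b - t := by
    intro t hat htb
    have h1 := hP1 (γ b) hb (γ t)
    have h2 : dist (γ b) (γ t) = b - t := by
      rw [hgeo b ⟨hab, le_refl b⟩ t ⟨hat, htb.le⟩, abs_of_nonneg (by linarith)]
    rw [hconst t hat htb] at h1
    nlinarith [dist_nonneg (x := π (γ a)) (y := γ t)]
  have hd0 : dist (γ b) (π (γ a)) ≤ 0 := by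
    refine le_of_forall_pos_le_add ?_
    intro ε hε
    have h1 : a ≤ max a (b - ε) := le_max_left _ _
    have h2 : max a (b - ε) < b := max_lt hlt (by linarith)
    have := key _ h1 h2
    have : b - max a (b - ε) ≤ ε := by
      have := le_max_right a (b - ε); linarith
    linarith [key _ h1 h2]
  have : dist (γ b) (π (γ a)) = 0 := le_antisymm hd0 dist_nonneg
  exact (dist_eq_zero.mp this).symm

/-- (P1) + (P2) imply (P'2), for a closed geodesic subset `P`. -/
theorem stmt13 {X : Type*} [MetricSpace X] [CompleteSpace X] (hX : GeodesicSpace X)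
    (Pset : Set X) (hP : Pset.Nonempty) (hPc : IsClosed Pset)
    (hPgeo : ∀ p ∈ Pset, ∀ q ∈ Pset, ∃ γ : ℝ → X, γ 0 = p ∧ γ (dist p q) = q ∧
      IsGeodesicOn γ 0 (dist p q) ∧ ∀ t ∈ Set.Icc 0 (dist p q), γ t ∈ Pset)
    (π : X → X)
    (hmaps : ∀ x, π x ∈ Pset)
    (hP1 : ∀ r ∈ Pset, ∀ z : X, dist r z = dist r (π z) + dist (π z) z)
    (hP2 : ∀ z : X, z ∉ Pset → ∃ ε > 0, ∀ w ∈ Metric.ball z ε, π w = π z) :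
    ∀ z₁ z₂ : X, π z₁ ≠ π z₂ →
      dist z₁ z₂ = dist z₁ (π z₁) + dist (π z₁) (π z₂) + dist (π z₂) z₂ := by
  intro z₁ z₂ hne
  obtain ⟨γ, h0, hLend, hgeo⟩ := hX z₁ z₂
  set L := dist z₁ z₂ with hLdef
  have hL0 : (0:ℝ) ≤ L := dist_nonneg
  set S : Set ℝ := Set.Icc 0 L ∩ γ ⁻¹' Pset with hSdef
  by_cases hS : S.Nonempty
  · -- γ meets Pset
    have hcontγ : ContinuousOn γ (Set.Icc 0 L) := by
      rw [Metric.continuousOn_iff]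
      intro u hu ε hε
      refine ⟨ε, hε, fun s hs hd => ?_⟩
      rw [hgeo s hs u hu, ← Real.dist_eq]
      exact hd
    have hScl : IsClosed S := hcontγ.preimage_isClosed_of_isClosed isClosed_Icc hPc
    have hSbdd : BddBelow S := ⟨0, fun x hx => hx.1.1⟩
    have hSbdd' : BddAbove S := ⟨L, fun x hx => hx.1.2⟩
    set t₁ := sInf S with ht₁
    set t₂ := sSup S with ht₂
    have ht₁S : t₁ ∈ S := hScl.csInf_mem hS hSbdd
    have ht₂S : t₂ ∈ S := hScl.csSup_mem hS hSbdd'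
    have ht12 : t₁ ≤ t₂ := csInf_le_csSup hS hSbdd hSbdd'
    have ht₁0 : (0:ℝ) ≤ t₁ := ht₁S.1.1
    have ht₂L : t₂ ≤ L := ht₂S.1.2
    -- π z₁ = γ t₁
    have h1 : π z₁ = γ t₁ := by
      have := firstHit Pset π hP1 hP2 γ 0 t₁ ht₁0
        (fun s hs t ht => hgeo s ⟨hs.1, le_trans hs.2 (le_trans ht12 ht₂L)⟩
          t ⟨ht.1, le_trans ht.2 (le_trans ht12 ht₂L)⟩)
        ht₁S.2
        (fun s hs0 hst₁ hsP => absurd (csInf_le hSbdd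
          ⟨⟨hs0, le_trans hst₁.le (le_trans ht12 ht₂L)⟩, hsP⟩) (not_le.mpr hst₁))
      rw [h0] at this; exact this
    -- π z₂ = γ t₂, via reversed geodesic
    have h2 : π z₂ = γ t₂ := by
      have hrev : IsGeodesicOn (fun s => γ (L - s)) 0 (L - t₂) := by
        intro s hs t ht
        have hsI : L - s ∈ Set.Icc 0 L := ⟨by linarith [hs.2, ht₂S.1.1], by linarith [hs.1]⟩
        have htI : L - t ∈ Set.Icc 0 L := ⟨by linarith [ht.2, ht₂S.1.1], by linarith [ht.1]⟩
        have := hgeo (L - s) hsI (L - t) htI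
        rw [this]
        rw [show L - s - (L - t) = -(s - t) by ring, abs_neg]
      have := firstHit Pset π hP1 hP2 (fun s => γ (L - s)) 0 (L - t₂) (by linarith)
        hrev
        (by simpa using ht₂S.2)
        (fun s hs0 hst hsP => by
          have h' : L - s ∈ S := ⟨⟨by linarith [ht₂S.1.1], by linarith⟩, hsP⟩
          have := le_csSup hSbdd' h'
          rw [← ht₂] at this
          linarith)
      simpa [hLend] using this
    -- distances along the geodesic
    have d1 : dist z₁ (π z₁) = t₁ := by
      rw [h1, ← h0, hgeo 0 ⟨le_refl 0, hL0⟩ t₁ ⟨ht₁0, le_trans ht12 ht₂L⟩,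
        abs_of_nonpos (by linarith)]
      ring
    have d2 : dist (π z₁) (π z₂) = t₂ - t₁ := by
      rw [h1, h2, hgeo t₁ ⟨ht₁0, le_trans ht12 ht₂L⟩ t₂ ⟨le_trans ht₁0 ht12, ht₂L⟩,
        abs_of_nonpos (by linarith)]
      ring
    have d3 : dist (π z₂) z₂ = L - t₂ := by
      rw [h2, ← hLend, hgeo t₂ ⟨le_trans ht₁0 ht12, ht₂L⟩ L ⟨hL0, le_refl L⟩,
        abs_of_nonpos (by linarith)]
      ring
    rw [d1, d2, d3]; ring
  · -- γ avoids Pset entirely: π ∘ γ is constant, contradiction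
    exfalso
    apply hne
    have : π (γ L) = π (γ 0) := by
      refine eq_const_of_locally_const (fun s => π (γ s)) 0 L hL0 ?_
      intro u hu
      have huP : γ u ∉ Pset := fun h => hS ⟨u, hu, h⟩
      obtain ⟨ε, hε, hεf⟩ := hP2 (γ u) huP
      refine ⟨ε, hε, fun s hs hsu => ?_⟩
      exact hεf (γ s) (by rw [Metric.mem_ball, hgeo s hs u hu]; exact hsu)
    rw [h0, hLend] at this
    exact this.symm
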